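/- Let g : [0,∞) → ℝ be continuous and nonnegative with first cumulative generator Ḡ(u) = ∫_u^∞ g(v) dv and second cumulative generator 𝒢̄(u) = ∫_u^∞ Ḡ(v) dv both finite on [0,∞), and let H : ℝ → ℝ be twice continuously differentiable and bounded with bounded derivatives. Then for all real a < b: ∫_a^b z² g(z²/2) H(z) dz = a H(a) Ḡ(a²/2) - b H(b) Ḡ(b²/2) + H'(a) 𝒢̄(a²/2) - H'(b) 𝒢̄(b²/2) + ∫_a^b H''(z) 𝒢̄(z²/2) dz + ∫_a^b H(z) Ḡ(z²/2) dz. -/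

import Mathlib

open MeasureTheory Set Real intervalIntegral

private lemma prim_hasDerivWithinAt {f : ℝ → ℝ} (hc : ContinuousOn f (Ici 0))
    (hi : IntegrableOn f (Ici 0)) {u : ℝ} (hu : 0 ≤ u) :
    HasDerivWithinAt (fun t => ∫ s in (0:ℝ)..t, f s) (f u) (Ici 0) u := by
  have hii : IntervalIntegrable f volume 0 u :=
    (hi.mono_set (by rw [uIcc_of_le hu]; exact Icc_subset_Ici_self)).intervalIntegrable
  rcases eq_or_lt_of_le hu with h | h
  · subst h
    have hmeas : StronglyMeasurableAtFilter f (nhdsWithin 0 (Ioi 0)) :=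
      ⟨Ici 0, Filter.mem_of_superset self_mem_nhdsWithin Ioi_subset_Ici_self,
        hc.aestronglyMeasurable measurableSet_Ici⟩
    exact intervalIntegral.integral_hasDerivWithinAt_right hii hmeas
      ((hc.continuousWithinAt self_mem_Ici).mono Ioi_subset_Ici_self)
  · have hmeas : StronglyMeasurableAtFilter f (nhds u) :=
      ⟨Ici 0, Ici_mem_nhds h, hc.aestronglyMeasurable measurableSet_Ici⟩
    have hca : ContinuousAt f u := hc.continuousAt (Ici_mem_nhds h)
    exact (intervalIntegral.integral_hasDerivAt_right hii hmeas hca).hasDerivWithinAt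

private lemma tail_eq {f : ℝ → ℝ} (hi : IntegrableOn f (Ici 0)) {u : ℝ} (hu : 0 ≤ u) :
    (∫ v in Ioi u, f v) = (∫ v in Ioi (0:ℝ), f v) - ∫ s in (0:ℝ)..u, f s := by
  have h1 : IntegrableOn f (Ioc 0 u) := hi.mono_set (fun x hx => le_of_lt hx.1)
  have h2 : IntegrableOn f (Ioi u) := hi.mono_set (Ioi_subset_Ici hu)
  rw [intervalIntegral.integral_of_le hu, eq_sub_iff_add_eq, add_comm,
    ← MeasureTheory.setIntegral_union (Ioc_disjoint_Ioi le_rfl) measurableSet_Ioi h1 h2,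
    Ioc_union_Ioi_eq_Ioi hu]

private lemma tail_hasDerivAt {f : ℝ → ℝ} (hc : ContinuousOn f (Ici 0))
    (hi : IntegrableOn f (Ici 0)) (z : ℝ) :
    HasDerivAt (fun z => ∫ v in Ioi (z ^ 2 / 2), f v) (-(z * f (z ^ 2 / 2))) z := by
  have hq : ∀ x : ℝ, (0:ℝ) ≤ x ^ 2 / 2 := fun x => by positivity
  have heq : (fun z => ∫ v in Ioi (z ^ 2 / 2), f v)
      = fun z => (∫ v in Ioi (0:ℝ), f v) - ∫ s in (0:ℝ)..(z ^ 2 / 2), f s := by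
    funext x; exact tail_eq hi (hq x)
  rw [heq]
  have hqd' : HasDerivAt (fun z : ℝ => z ^ 2 / 2) z z := by
    simpa using ((hasDerivAt_pow 2 z).div_const 2)
  have hqd : HasDerivWithinAt (fun z : ℝ => z ^ 2 / 2) z univ z := hqd'.hasDerivWithinAt
  have hcomp : HasDerivWithinAt (fun z : ℝ => ∫ s in (0:ℝ)..(z ^ 2 / 2), f s)
      (f (z ^ 2 / 2) * z) univ z :=
    HasDerivWithinAt.comp (h := fun z : ℝ => z ^ 2 / 2) (x := z) (hh := hqd)
      (hst := fun x _ => hq x) (hh₂ := prim_hasDerivWithinAt hc hi (hq z))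
  have := (hasDerivAt_const z (∫ v in Ioi (0:ℝ), f v)).sub (hcomp.hasDerivAt (by simp))
  exact (this : HasDerivAt (fun z => (∫ v in Ioi (0:ℝ), f v) - ∫ s in (0:ℝ)..(z ^ 2 / 2), f s) _ z).congr_deriv (by ring)

private lemma tail_continuousOn {f : ℝ → ℝ} (hc : ContinuousOn f (Ici 0))
    (hi : IntegrableOn f (Ici 0)) :
    ContinuousOn (fun u => ∫ v in Ioi u, f v) (Ici 0) := by
  intro u hu
  have : ContinuousWithinAt (fun u => (∫ v in Ioi (0:ℝ), f v) - ∫ s in (0:ℝ)..u, f s)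
      (Ici 0) u :=
    (continuousWithinAt_const).sub (prim_hasDerivWithinAt hc hi hu).continuousWithinAt
  exact this.congr (fun x hx => tail_eq hi hx) (tail_eq hi hu)

theorem second_moment_integration_by_parts
    (g : ℝ → ℝ) (hg_cont : ContinuousOn g (Ici 0))
    (hg_nonneg : ∀ v, 0 ≤ v → 0 ≤ g v)
    (hg_int : IntegrableOn g (Ici 0))
    (hG_int : IntegrableOn (fun v => ∫ w in Ioi v, g w) (Ici 0))
    (H : ℝ → ℝ) (hH : ContDiff ℝ 2 H)
    (hHbd : ∃ C, ∀ z, |H z| ≤ C)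
    (hH'bd : ∃ C, ∀ z, |deriv H z| ≤ C)
    (hH''bd : ∃ C, ∀ z, |deriv (deriv H) z| ≤ C)
    (a b : ℝ) (hab : a < b) :
    (∫ z in a..b, z ^ 2 * g (z ^ 2 / 2) * H z) =
      a * H a * (∫ v in Ioi (a ^ 2 / 2), g v)
        - b * H b * (∫ v in Ioi (b ^ 2 / 2), g v)
        + deriv H a * (∫ v in Ioi (a ^ 2 / 2), ∫ w in Ioi v, g w)
        - deriv H b * (∫ v in Ioi (b ^ 2 / 2), ∫ w in Ioi v, g w)
        + (∫ z in a..b,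
            deriv (deriv H) z * (∫ v in Ioi (z ^ 2 / 2), ∫ w in Ioi v, g w))
        + ∫ z in a..b, H z * (∫ v in Ioi (z ^ 2 / 2), g v) := by
  set G : ℝ → ℝ := fun u => ∫ v in Ioi u, g v with hG
  set G2 : ℝ → ℝ := fun u => ∫ v in Ioi u, G v with hG2
  have hq : ∀ x : ℝ, (0:ℝ) ≤ x ^ 2 / 2 := fun x => by positivity
  -- regularity of H
  have hHd : Differentiable ℝ H := hH.differentiable (by norm_num)
  have hH1 : ContDiff ℝ 1 (deriv H) := by
    have h2 : ContDiff ℝ (1 + 1 : WithTop ℕ∞) H := by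
      rw [one_add_one_eq_two]; exact hH
    exact (contDiff_succ_iff_deriv.mp h2).2.2
  have hH'd : Differentiable ℝ (deriv H) := hH1.differentiable (by norm_num)
  have hH''c : Continuous (deriv (deriv H)) := (contDiff_one_iff_deriv.mp hH1).2
  have hHc : Continuous H := hHd.continuous
  have hH'c : Continuous (deriv H) := hH'd.continuous
  -- continuity of G on Ici 0
  have hGc : ContinuousOn G (Ici 0) := tail_continuousOn hg_cont hg_int
  -- continuity of compositions
  have hqc : Continuous (fun z : ℝ => z ^ 2 / 2) := by continuity
  have hgq : Continuous (fun z : ℝ => g (z ^ 2 / 2)) :=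
    hg_cont.comp_continuous hqc (fun x => hq x)
  have hGq : Continuous (fun z : ℝ => G (z ^ 2 / 2)) :=
    hGc.comp_continuous hqc (fun x => hq x)
  -- first IBP: u = z H z, v = -G(z^2/2)
  have hu1 : ∀ x ∈ uIcc a b, HasDerivAt (fun z => z * H z) (H x + x * deriv H x) x := by
    intro x _
    have := (hasDerivAt_id x).mul (hHd x).hasDerivAt
    exact (this : HasDerivAt (fun z => z * H z) _ x).congr_deriv (by simp only [id]; ring)
  have hv1 : ∀ x ∈ uIcc a b, HasDerivAt (fun z => -G (z ^ 2 / 2)) (x * g (x ^ 2 / 2)) x := by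
    intro x _
    exact ((tail_hasDerivAt hg_cont hg_int x).neg : HasDerivAt (fun z => -G (z ^ 2 / 2)) _ x).congr_deriv (by ring)
  have hu1' : IntervalIntegrable (fun x => H x + x * deriv H x) volume a b :=
    (hHc.add (continuous_id.mul hH'c)).intervalIntegrable a b
  have hv1' : IntervalIntegrable (fun x => x * g (x ^ 2 / 2)) volume a b :=
    (continuous_id.mul hgq).intervalIntegrable a b
  have ibp1 := intervalIntegral.integral_mul_deriv_eq_deriv_mul hu1 hv1 hu1' hv1'
  -- LHS rewrite
  have hL : (∫ z in a..b, z ^ 2 * g (z ^ 2 / 2) * H z)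
      = ∫ x in a..b, (x * H x) * (x * g (x ^ 2 / 2)) := by
    apply intervalIntegral.integral_congr; intro x _; ring
  -- second IBP: u = deriv H, v = -G2(z^2/2)
  have hu2 : ∀ x ∈ uIcc a b, HasDerivAt (deriv H) (deriv (deriv H) x) x :=
    fun x _ => (hH'd x).hasDerivAt
  have hv2 : ∀ x ∈ uIcc a b, HasDerivAt (fun z => -G2 (z ^ 2 / 2)) (x * G (x ^ 2 / 2)) x := by
    intro x _
    exact ((tail_hasDerivAt hGc hG_int x).neg : HasDerivAt (fun z => -G2 (z ^ 2 / 2)) _ x).congr_deriv (by ring)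
  have hu2' : IntervalIntegrable (fun x => deriv (deriv H) x) volume a b :=
    hH''c.intervalIntegrable a b
  have hv2' : IntervalIntegrable (fun x => x * G (x ^ 2 / 2)) volume a b :=
    (continuous_id.mul hGq).intervalIntegrable a b
  have ibp2 := intervalIntegral.integral_mul_deriv_eq_deriv_mul hu2 hv2 hu2' hv2'
  -- split ∫ (H + zH') * (-G∘q)
  have hGqi : IntervalIntegrable (fun x => H x * G (x ^ 2 / 2)) volume a b :=
    (hHc.mul hGq).intervalIntegrable a b
  have hGqi2 : IntervalIntegrable (fun x => deriv H x * (x * G (x ^ 2 / 2))) volume a b :=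
    (hH'c.mul (continuous_id.mul hGq)).intervalIntegrable a b
  have hsplit : (∫ x in a..b, (H x + x * deriv H x) * (-G (x ^ 2 / 2)))
      = -(∫ x in a..b, H x * G (x ^ 2 / 2)) - ∫ x in a..b, deriv H x * (x * G (x ^ 2 / 2)) := by
    have he : (∫ x in a..b, (H x + x * deriv H x) * (-G (x ^ 2 / 2)))
        = ∫ x in a..b, (-(H x * G (x ^ 2 / 2)) + -(deriv H x * (x * G (x ^ 2 / 2)))) := by
      apply intervalIntegral.integral_congr; intro x _; ring
    have hsum := intervalIntegral.integral_add hGqi.neg hGqi2.neg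
    simp only [Pi.neg_apply] at hsum
    rw [he, hsum, intervalIntegral.integral_neg, intervalIntegral.integral_neg]
    ring
  rw [hL, ibp1, hsplit]
  have hG2i : (∫ x in a..b, deriv H x * (x * G (x ^ 2 / 2))) =
      deriv H b * (-G2 (b ^ 2 / 2)) - deriv H a * (-G2 (a ^ 2 / 2))
        - ∫ x in a..b, deriv (deriv H) x * (-G2 (x ^ 2 / 2)) := ibp2
  rw [hG2i]
  have h1 : (∫ x in a..b, deriv (deriv H) x * (-G2 (x ^ 2 / 2)))
      = -∫ x in a..b, deriv (deriv H) x * G2 (x ^ 2 / 2) := by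
    rw [← intervalIntegral.integral_neg]
    apply intervalIntegral.integral_congr; intro x _; ring
  rw [h1]
  simp only [hG, hG2]
  ring
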